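/- Let U be an open set of the bicomplex numbers 𝕋 and let f : U → 𝕋 be of class C¹, written as f(z₁ + z₂i₂) = f₁(z₁, z₂) + f₂(z₁, z₂)i₂ with f₁, f₂ valued in ℂ(i₁). Then f is 𝕋-holomorphic on U if and only if f₁ and f₂ are holomorphic in z₁ and in z₂ (i.e. ∂f_k/∂z̄₁ = ∂f_k/∂z̄₂ = 0 for k = 1,2) and the complexified Cauchy–Riemann equations ∂f₁/∂z₁ = ∂f₂/∂z₂ and ∂f₂/∂z₁ = −∂f₁/∂z₂ hold on U. Moreover in that case f′ = ∂f₁/∂z₁ + (∂f₂/∂z₁)i₂, and f′(w) is invertible in 𝕋 if and only if the Jacobian determinant det J_f(w) is nonzero. -/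

import Mathlib

noncomputable section

open Complex Filter Topology

/-- The bicomplex numbers `𝕋 = {z₁ + z₂ i₂ : z₁, z₂ ∈ ℂ(i₁)}`, represented by the pair
of `ℂ(i₁)`-components `(z₁, z₂)`. -/
@[ext] structure Bicomplex : Type where
  z1 : ℂ
  z2 : ℂ

namespace Bicomplex

instance : Zero Bicomplex := ⟨⟨0, 0⟩⟩
instance : One Bicomplex := ⟨⟨1, 0⟩⟩
instance : Add Bicomplex := ⟨fun w v => ⟨w.z1 + v.z1, w.z2 + v.z2⟩⟩
instance : Neg Bicomplex := ⟨fun w => ⟨-w.z1, -w.z2⟩⟩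
instance : Mul Bicomplex := ⟨fun w v => ⟨w.z1 * v.z1 - w.z2 * v.z2, w.z1 * v.z2 + w.z2 * v.z1⟩⟩

@[simp] lemma zero_z1 : (0 : Bicomplex).z1 = 0 := rfl
@[simp] lemma zero_z2 : (0 : Bicomplex).z2 = 0 := rfl
@[simp] lemma one_z1 : (1 : Bicomplex).z1 = 1 := rfl
@[simp] lemma one_z2 : (1 : Bicomplex).z2 = 0 := rfl
@[simp] lemma add_z1 (w v : Bicomplex) : (w + v).z1 = w.z1 + v.z1 := rfl
@[simp] lemma add_z2 (w v : Bicomplex) : (w + v).z2 = w.z2 + v.z2 := rfl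
@[simp] lemma neg_z1 (w : Bicomplex) : (-w).z1 = -w.z1 := rfl
@[simp] lemma neg_z2 (w : Bicomplex) : (-w).z2 = -w.z2 := rfl
@[simp] lemma mul_z1 (w v : Bicomplex) : (w * v).z1 = w.z1 * v.z1 - w.z2 * v.z2 := rfl
@[simp] lemma mul_z2 (w v : Bicomplex) : (w * v).z2 = w.z1 * v.z2 + w.z2 * v.z1 := rfl

/-- The bicomplex numbers form a commutative ring. -/
instance : CommRing Bicomplex where
  nsmul n w := ⟨n • w.z1, n • w.z2⟩
  zsmul n w := ⟨n • w.z1, n • w.z2⟩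
  nsmul_zero a := by ext <;> exact zero_nsmul _
  nsmul_succ n a := by ext <;> exact succ_nsmul _ _
  zsmul_zero' a := by ext <;> exact zero_zsmul _
  zsmul_succ' n a := by ext <;> exact SubNegMonoid.zsmul_succ' _ _
  zsmul_neg' n a := by ext <;> exact SubNegMonoid.zsmul_neg' _ _
  add_assoc a b c := by ext <;> simp <;> ring
  zero_add a := by ext <;> simp
  add_zero a := by ext <;> simp
  add_comm a b := by ext <;> simp <;> ring
  neg_add_cancel a := by ext <;> simp
  mul_assoc a b c := by ext <;> simp <;> ring
  one_mul a := by ext <;> simp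
  mul_one a := by ext <;> simp
  left_distrib a b c := by ext <;> simp <;> ring
  right_distrib a b c := by ext <;> simp <;> ring
  zero_mul a := by ext <;> simp
  mul_zero a := by ext <;> simp
  mul_comm a b := by ext <;> simp <;> ring

/-- Inverse: `w⁻¹ = w†₂ / (z₁² + z₂²)` (junk value `0/0` on the null-cone). -/
instance : Inv Bicomplex :=
  ⟨fun w => ⟨w.z1 / (w.z1 ^ 2 + w.z2 ^ 2), -w.z2 / (w.z1 ^ 2 + w.z2 ^ 2)⟩⟩

instance : Div Bicomplex := ⟨fun w v => w * v⁻¹⟩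

/-- Embedding of `ℂ(i₁)` into `𝕋`. -/
def ofComplex (c : ℂ) : Bicomplex := ⟨c, 0⟩

/-- Embedding of `ℝ` into `𝕋`. -/
def ofReal (t : ℝ) : Bicomplex := ⟨(t : ℂ), 0⟩

/-- The imaginary unit `i₁`. -/
def i1 : Bicomplex := ⟨Complex.I, 0⟩

/-- The imaginary unit `i₂`. -/
def i2 : Bicomplex := ⟨0, 1⟩

/-- The hyperbolic unit `j = i₁ i₂`. -/
def jj : Bicomplex := ⟨0, Complex.I⟩

/-- The idempotent `e₁ = (1 + j)/2`. -/
def e1 : Bicomplex := ⟨1 / 2, Complex.I / 2⟩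

/-- The idempotent `e₂ = (1 - j)/2`. -/
def e2 : Bicomplex := ⟨1 / 2, -(Complex.I) / 2⟩

/-- The projection `P₁(z₁ + z₂ i₂) = z₁ - z₂ i₁`. -/
def P1 (w : Bicomplex) : ℂ := w.z1 - w.z2 * Complex.I

/-- The projection `P₂(z₁ + z₂ i₂) = z₁ + z₂ i₁`. -/
def P2 (w : Bicomplex) : ℂ := w.z1 + w.z2 * Complex.I

/-- The conjugation `w†₁ = z̄₁ + z̄₂ i₂`. -/
def dag1 (w : Bicomplex) : Bicomplex := ⟨(starRingEnd ℂ) w.z1, (starRingEnd ℂ) w.z2⟩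

/-- The conjugation `w†₂ = z₁ - z₂ i₂`. -/
def dag2 (w : Bicomplex) : Bicomplex := ⟨w.z1, -w.z2⟩

/-- The conjugation `w†₃ = z̄₁ - z̄₂ i₂`. -/
def dag3 (w : Bicomplex) : Bicomplex := ⟨(starRingEnd ℂ) w.z1, -((starRingEnd ℂ) w.z2)⟩

/-- `𝕋` as `ℂ × ℂ`. -/
def toProd (w : Bicomplex) : ℂ × ℂ := (w.z1, w.z2)

/-- `ℂ × ℂ` as `𝕋`. -/
def ofProd (p : ℂ × ℂ) : Bicomplex := ⟨p.1, p.2⟩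

instance : TopologicalSpace Bicomplex := TopologicalSpace.induced toProd inferInstance

/-- The set of points `w` such that `w - w₀` is invertible (i.e. not a zero divisor). -/
def invertibleDiff (w₀ : Bicomplex) : Set Bicomplex :=
  {w | (w - w₀).z1 ^ 2 + (w - w₀).z2 ^ 2 ≠ 0}

/-- `f` is `𝕋`-differentiable at `w₀` with derivative `d`:
`(f w - f w₀)/(w - w₀) → d` as `w → w₀` with `w - w₀` invertible. -/
def HasTDerivAt (f : Bicomplex → Bicomplex) (d w₀ : Bicomplex) : Prop :=
  Tendsto (fun w => (f w - f w₀) / (w - w₀)) (𝓝[invertibleDiff w₀] w₀) (𝓝 d)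

/-- `f` is `𝕋`-holomorphic on `U` if it is `𝕋`-differentiable at each point of `U`. -/
def THolomorphicOn (f : Bicomplex → Bicomplex) (U : Set Bicomplex) : Prop :=
  ∀ w ∈ U, ∃ d, HasTDerivAt f d w

/-- `f` viewed as a map `ℂ² → ℂ²`. -/
def fProd (f : Bicomplex → Bicomplex) : ℂ × ℂ → ℂ × ℂ := fun p => toProd (f (ofProd p))

/-- `f : 𝕋 → 𝕋` is `n` times continuously (real-)differentiable on `U`. -/
def TContDiffOn (n : ℕ∞) (f : Bicomplex → Bicomplex) (U : Set Bicomplex) : Prop :=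
  ContDiffOn ℝ n (fProd f) (toProd '' U)

/-- `g : 𝕋 → ℂ` is `n` times continuously (real-)differentiable on `U`. -/
def CContDiffOn (n : ℕ∞) (g : Bicomplex → ℂ) (U : Set Bicomplex) : Prop :=
  ContDiffOn ℝ n (fun p => g (ofProd p)) (toProd '' U)

/-- Real partial derivative of `g : 𝕋 → ℂ` at `w` in direction `e`. -/
def pd (e : Bicomplex) (g : Bicomplex → ℂ) (w : Bicomplex) : ℂ :=
  deriv (fun t : ℝ => g (w + ofReal t * e)) 0

/-- Existence of the real partial derivative of `g : 𝕋 → ℂ` at `w` in direction `e`. -/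
def pdExists (e : Bicomplex) (g : Bicomplex → ℂ) (w : Bicomplex) : Prop :=
  DifferentiableAt ℝ (fun t : ℝ => g (w + ofReal t * e)) 0

/-- The scalar (`ℂ(i₁)`-) component `f₁` of `f = f₁ + f₂ i₂`. -/
def s1 (f : Bicomplex → Bicomplex) : Bicomplex → ℂ := fun w => (f w).z1

/-- The vectorial (`ℂ(i₁)`-) component `f₂` of `f = f₁ + f₂ i₂`. -/
def s2 (f : Bicomplex → Bicomplex) : Bicomplex → ℂ := fun w => (f w).z2

/-- Real partial derivative of `f : 𝕋 → 𝕋` in direction `e`. -/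
def pdT (e : Bicomplex) (f : Bicomplex → Bicomplex) : Bicomplex → Bicomplex :=
  fun w => ⟨pd e (s1 f) w, pd e (s2 f) w⟩

/-- Existence of the real partial derivative of `f : 𝕋 → 𝕋` in direction `e`. -/
def pdTExists (e : Bicomplex) (f : Bicomplex → Bicomplex) (w : Bicomplex) : Prop :=
  pdExists e (s1 f) w ∧ pdExists e (s2 f) w

/-- `∂_{z₁} g = ½(∂ₓ g - i₁ ∂_y g)` for `g : 𝕋 → ℂ`. -/
def dz1 (g : Bicomplex → ℂ) : Bicomplex → ℂ :=
  fun w => (pd 1 g w - Complex.I * pd i1 g w) / 2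

/-- `∂_{z̄₁} g = ½(∂ₓ g + i₁ ∂_y g)` for `g : 𝕋 → ℂ`. -/
def dz1bar (g : Bicomplex → ℂ) : Bicomplex → ℂ :=
  fun w => (pd 1 g w + Complex.I * pd i1 g w) / 2

/-- `∂_{z₂} g = ½(∂_p g - i₁ ∂_q g)` for `g : 𝕋 → ℂ`. -/
def dz2 (g : Bicomplex → ℂ) : Bicomplex → ℂ :=
  fun w => (pd i2 g w - Complex.I * pd jj g w) / 2

/-- `∂_{z̄₂} g = ½(∂_p g + i₁ ∂_q g)` for `g : 𝕋 → ℂ`. -/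
def dz2bar (g : Bicomplex → ℂ) : Bicomplex → ℂ :=
  fun w => (pd i2 g w + Complex.I * pd jj g w) / 2

/-- `∂_{z₁}` applied componentwise to `f : 𝕋 → 𝕋`. -/
def dZ1 (f : Bicomplex → Bicomplex) : Bicomplex → Bicomplex :=
  fun w => ⟨dz1 (s1 f) w, dz1 (s2 f) w⟩

/-- `∂_{z₂}` applied componentwise to `f : 𝕋 → 𝕋`. -/
def dZ2 (f : Bicomplex → Bicomplex) : Bicomplex → Bicomplex :=
  fun w => ⟨dz2 (s1 f) w, dz2 (s2 f) w⟩

/-- `∂_{z̄₁}` applied componentwise to `f : 𝕋 → 𝕋`. -/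
def dZ1bar (f : Bicomplex → Bicomplex) : Bicomplex → Bicomplex :=
  fun w => ⟨dz1bar (s1 f) w, dz1bar (s2 f) w⟩

/-- `∂_{z̄₂}` applied componentwise to `f : 𝕋 → 𝕋`. -/
def dZ2bar (f : Bicomplex → Bicomplex) : Bicomplex → Bicomplex :=
  fun w => ⟨dz2bar (s1 f) w, dz2bar (s2 f) w⟩

/-- `∂_ω = ½(∂_{z₁} - i₂ ∂_{z₂})`. -/
def dOm (f : Bicomplex → Bicomplex) : Bicomplex → Bicomplex :=
  fun w => ofComplex (1 / 2) * (dZ1 f w - i2 * dZ2 f w)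

/-- `∂_{ω†₂} = ∂_ω̄ = ½(∂_{z₁} + i₂ ∂_{z₂})`. -/
def dOmBar (f : Bicomplex → Bicomplex) : Bicomplex → Bicomplex :=
  fun w => ofComplex (1 / 2) * (dZ1 f w + i2 * dZ2 f w)

/-- `∂_{ω†₁} = ½(∂_{z̄₁} - i₂ ∂_{z̄₂})`. -/
def dOmDag1 (f : Bicomplex → Bicomplex) : Bicomplex → Bicomplex :=
  fun w => ofComplex (1 / 2) * (dZ1bar f w - i2 * dZ2bar f w)

/-- `∂_{ω†₃} = ½(∂_{z̄₁} + i₂ ∂_{z̄₂})`. -/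
def dOmDag3 (f : Bicomplex → Bicomplex) : Bicomplex → Bicomplex :=
  fun w => ofComplex (1 / 2) * (dZ1bar f w + i2 * dZ2bar f w)

/-- The complexified Laplacian `Δ_ℂ = ∂²_{z₁} + ∂²_{z₂}` acting on `ℂ(i₁)`-valued functions. -/
def lapC (g : Bicomplex → ℂ) : Bicomplex → ℂ :=
  fun w => dz1 (dz1 g) w + dz2 (dz2 g) w

/-- The vector part in the `i₂`-representation `w = ζ₁ + ζ₂ i₁` with `ζ₁, ζ₂ ∈ ℂ(i₂)`:
for `w = x₁ + x₂i₁ + x₃i₂ + x₄j`, `Vec(w) = x₂ + x₄ i₂`, encoded as the complex number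
`x₂ + x₄ i`. -/
def vec2 (w : Bicomplex) : ℂ := ⟨w.z1.im, w.z2.im⟩

/-- Embedding of `ℂ(i₂)` into `𝕋`: the complex number `a + b i` represents `a + b i₂`. -/
def ofC2 (c : ℂ) : Bicomplex := ⟨(c.re : ℂ), (c.im : ℂ)⟩

/-- Multiplication of hyperbolic numbers `ℂ(j) = {x + yj}`, encoded as pairs in `ℝ × ℝ`. -/
def hmul (a b : ℝ × ℝ) : ℝ × ℝ := (a.1 * b.1 + a.2 * b.2, a.1 * b.2 + a.2 * b.1)

/-- Division of hyperbolic numbers (junk value when the denominator is a zero divisor). -/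
def hdiv (a b : ℝ × ℝ) : ℝ × ℝ :=
  hmul a (b.1 / (b.1 ^ 2 - b.2 ^ 2), -b.2 / (b.1 ^ 2 - b.2 ^ 2))

/-- Embedding of the hyperbolic numbers `ℂ(j)` into `𝕋`: `(x, y) ↦ x + y j`. -/
def ofHyp (a : ℝ × ℝ) : Bicomplex := ⟨(a.1 : ℂ), (a.2 : ℂ) * Complex.I⟩

/-- The vector part in the `j`-representation `w = ζ₁ + ζ₂ i₁` with `ζ₁, ζ₂ ∈ ℂ(j)`:
for `w = x₁ + x₂i₁ + x₃i₂ + x₄j`, `Vec(w) = x₂ - x₃ j`, encoded as the pair `(x₂, -x₃)`. -/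
def vec3 (w : Bicomplex) : ℝ × ℝ := (w.z1.im, -w.z2.re)

/-- The `𝕋`-cartesian set `X₁ ×ₑ X₂ = {w : P₁ w ∈ X₁ ∧ P₂ w ∈ X₂}`. -/
def eProd (X₁ X₂ : Set ℂ) : Set Bicomplex := {w | P1 w ∈ X₁ ∧ P2 w ∈ X₂}

/-- `(F, G)` is an `i₁`-generating pair on `D`. -/
def GenPair1 (F G : Bicomplex → Bicomplex) (D : Set Bicomplex) : Prop :=
  TContDiffOn 2 F D ∧ TContDiffOn 2 G D ∧ ∀ w ∈ D, (dag2 (F w) * G w).z2 ≠ 0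

/-- `(F, G)` is an `i₂`-generating pair on `D`. -/
def GenPair2 (F G : Bicomplex → Bicomplex) (D : Set Bicomplex) : Prop :=
  TContDiffOn 2 F D ∧ TContDiffOn 2 G D ∧ ∀ w ∈ D, vec2 (dag1 (F w) * G w) ≠ 0

/-- `(F, G)` is a `j`-generating pair on `D`. -/
def GenPairJ (F G : Bicomplex → Bicomplex) (D : Set Bicomplex) : Prop :=
  TContDiffOn 2 F D ∧ TContDiffOn 2 G D ∧ ∀ w ∈ D, vec3 (dag3 (F w) * G w) ≠ 0

/-- The unique `λ₀ ∈ ℂ(i₁)` with `w(ω₀) = λ₀ F(ω₀) + μ₀ G(ω₀)`. -/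
def lam1 (F G wf : Bicomplex → Bicomplex) (ω₀ : Bicomplex) : ℂ :=
  (dag2 (wf ω₀) * G ω₀).z2 / (dag2 (F ω₀) * G ω₀).z2

/-- The unique `μ₀ ∈ ℂ(i₁)` with `w(ω₀) = λ₀ F(ω₀) + μ₀ G(ω₀)`. -/
def mu1 (F G wf : Bicomplex → Bicomplex) (ω₀ : Bicomplex) : ℂ :=
  -((dag2 (wf ω₀) * F ω₀).z2 / (dag2 (F ω₀) * G ω₀).z2)

/-- `w` has `(F,G)_{i₁}`-derivative `d` at `ω₀`. -/
def HasFGDeriv1 (F G wf : Bicomplex → Bicomplex) (d ω₀ : Bicomplex) : Prop :=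
  Tendsto
    (fun ω => (wf ω - ofComplex (lam1 F G wf ω₀) * F ω - ofComplex (mu1 F G wf ω₀) * G ω)
        / (ω - ω₀))
    (𝓝[invertibleDiff ω₀] ω₀) (𝓝 d)

/-- The unique `λ₀ ∈ ℂ(j)` with `w(ω₀) = λ₀ F(ω₀) + μ₀ G(ω₀)`. -/
def lamJ (F G wf : Bicomplex → Bicomplex) (ω₀ : Bicomplex) : ℝ × ℝ :=
  hdiv (vec3 (dag3 (wf ω₀) * G ω₀)) (vec3 (dag3 (F ω₀) * G ω₀))

/-- The unique `μ₀ ∈ ℂ(j)` with `w(ω₀) = λ₀ F(ω₀) + μ₀ G(ω₀)`. -/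
def muJ (F G wf : Bicomplex → Bicomplex) (ω₀ : Bicomplex) : ℝ × ℝ :=
  -(hdiv (vec3 (dag3 (wf ω₀) * F ω₀)) (vec3 (dag3 (F ω₀) * G ω₀)))

/-- `w` has `(F,G)_j`-derivative `d` at `ω₀`. -/
def HasFGDerivJ (F G wf : Bicomplex → Bicomplex) (d ω₀ : Bicomplex) : Prop :=
  Tendsto
    (fun ω => (wf ω - ofHyp (lamJ F G wf ω₀) * F ω - ofHyp (muJ F G wf ω₀) * G ω) / (ω - ω₀))
    (𝓝[invertibleDiff ω₀] ω₀) (𝓝 d)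

/-- `w` is `(F,G)_j`-pseudoanalytic on `D`. -/
def PseudoanalyticJ (F G wf : Bicomplex → Bicomplex) (D : Set Bicomplex) : Prop :=
  ∀ ω ∈ D, ∃ d, HasFGDerivJ F G wf d ω

/-- `w` has continuous partial derivatives in a neighborhood of `ω₀`. -/
def HasContPartialsNear (f : Bicomplex → Bicomplex) (w₀ : Bicomplex) : Prop :=
  ∃ V ∈ 𝓝 w₀, ∀ e ∈ ({1, i1, i2, jj} : Set Bicomplex),
    (∀ w ∈ V, pdTExists e f w) ∧ ContinuousOn (pdT e f) V

/-! Characteristic coefficients with respect to the `†₂` conjugation (`i₁` case). -/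

def denom2 (F G : Bicomplex → Bicomplex) (w : Bicomplex) : Bicomplex :=
  F w * dag2 (G w) - dag2 (F w) * G w

def aCoef2₁ (F G : Bicomplex → Bicomplex) (w : Bicomplex) : Bicomplex :=
  -((dag1 (F w) * dOmDag1 G w - dOmDag1 F w * dag1 (G w)) / denom2 F G w)

def bCoef2₁ (F G : Bicomplex → Bicomplex) (w : Bicomplex) : Bicomplex :=
  (F w * dOmDag1 G w - dOmDag1 F w * G w) / denom2 F G w

def aCoef2₂ (F G : Bicomplex → Bicomplex) (w : Bicomplex) : Bicomplex :=
  -((dag2 (F w) * dOmBar G w - dOmBar F w * dag2 (G w)) / denom2 F G w)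

def bCoef2₂ (F G : Bicomplex → Bicomplex) (w : Bicomplex) : Bicomplex :=
  (F w * dOmBar G w - dOmBar F w * G w) / denom2 F G w

def aCoef2₃ (F G : Bicomplex → Bicomplex) (w : Bicomplex) : Bicomplex :=
  -((dag3 (F w) * dOmDag3 G w - dOmDag3 F w * dag3 (G w)) / denom2 F G w)

def bCoef2₃ (F G : Bicomplex → Bicomplex) (w : Bicomplex) : Bicomplex :=
  (F w * dOmDag3 G w - dOmDag3 F w * G w) / denom2 F G w

def Acoef2 (F G : Bicomplex → Bicomplex) (w : Bicomplex) : Bicomplex :=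
  -((dag2 (F w) * dOm G w - dOm F w * dag2 (G w)) / denom2 F G w)

def Bcoef2 (F G : Bicomplex → Bicomplex) (w : Bicomplex) : Bicomplex :=
  (F w * dOm G w - dOm F w * G w) / denom2 F G w

/-! Characteristic coefficients with respect to the `†₃` conjugation (`j` case). -/

def denom3 (F G : Bicomplex → Bicomplex) (w : Bicomplex) : Bicomplex :=
  F w * dag3 (G w) - dag3 (F w) * G w

def aCoef3₁ (F G : Bicomplex → Bicomplex) (w : Bicomplex) : Bicomplex :=
  -((dag1 (F w) * dOmDag1 G w - dOmDag1 F w * dag1 (G w)) / denom3 F G w)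

def bCoef3₁ (F G : Bicomplex → Bicomplex) (w : Bicomplex) : Bicomplex :=
  (F w * dOmDag1 G w - dOmDag1 F w * G w) / denom3 F G w

def aCoef3₂ (F G : Bicomplex → Bicomplex) (w : Bicomplex) : Bicomplex :=
  -((dag2 (F w) * dOmBar G w - dOmBar F w * dag2 (G w)) / denom3 F G w)

def bCoef3₂ (F G : Bicomplex → Bicomplex) (w : Bicomplex) : Bicomplex :=
  (F w * dOmBar G w - dOmBar F w * G w) / denom3 F G w

def aCoef3₃ (F G : Bicomplex → Bicomplex) (w : Bicomplex) : Bicomplex :=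
  -((dag3 (F w) * dOmDag3 G w - dOmDag3 F w * dag3 (G w)) / denom3 F G w)

def bCoef3₃ (F G : Bicomplex → Bicomplex) (w : Bicomplex) : Bicomplex :=
  (F w * dOmDag3 G w - dOmDag3 F w * G w) / denom3 F G w

def Acoef3 (F G : Bicomplex → Bicomplex) (w : Bicomplex) : Bicomplex :=
  -((dag3 (F w) * dOm G w - dOm F w * dag3 (G w)) / denom3 F G w)

def Bcoef3 (F G : Bicomplex → Bicomplex) (w : Bicomplex) : Bicomplex :=
  (F w * dOm G w - dOm F w * G w) / denom3 F G w

/-! Classical (Bers) pseudoanalytic function theory in `ℂ(i₁)`. -/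

/-- A complex (in `i₁`) generating pair on `D ⊆ ℂ(i₁)`. -/
def ComplexGenPair (Fe Ge : ℂ → ℂ) (D : Set ℂ) : Prop :=
  ContDiffOn ℝ 2 Fe D ∧ ContDiffOn ℝ 2 Ge D ∧
    ∀ z ∈ D, ((starRingEnd ℂ) (Fe z) * Ge z).im ≠ 0

/-- The unique real `λ₀` with `w(z₀) = λ₀ F(z₀) + μ₀ G(z₀)`. -/
def lamBers (Fe Ge we : ℂ → ℂ) (z₀ : ℂ) : ℝ :=
  ((starRingEnd ℂ) (we z₀) * Ge z₀).im / ((starRingEnd ℂ) (Fe z₀) * Ge z₀).im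

/-- The unique real `μ₀` with `w(z₀) = λ₀ F(z₀) + μ₀ G(z₀)`. -/
def muBers (Fe Ge we : ℂ → ℂ) (z₀ : ℂ) : ℝ :=
  -(((starRingEnd ℂ) (we z₀) * Fe z₀).im / ((starRingEnd ℂ) (Fe z₀) * Ge z₀).im)

/-- `w_e` has Bers `(F_e,G_e)`-derivative `d` at `z₀`. -/
def HasBersDerivAt (Fe Ge we : ℂ → ℂ) (d z₀ : ℂ) : Prop :=
  Tendsto
    (fun z => (we z - (lamBers Fe Ge we z₀ : ℂ) * Fe z - (muBers Fe Ge we z₀ : ℂ) * Ge z)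
        / (z - z₀))
    (𝓝[≠] z₀) (𝓝 d)

/-- `w_e` is `(F_e,G_e)`-pseudoanalytic (in the sense of Bers) on `D`. -/
def BersPseudoanalyticOn (Fe Ge we : ℂ → ℂ) (D : Set ℂ) : Prop :=
  ∀ z ∈ D, ∃ d, HasBersDerivAt Fe Ge we d z

/-- `∂_z̄ = ½(∂ₓ + i ∂_y)` for functions `ℂ(i₁) → ℂ(i₁)`. -/
def dzbarC (g : ℂ → ℂ) (z : ℂ) : ℂ :=
  (deriv (fun t : ℝ => g (z + t)) 0 + Complex.I * deriv (fun t : ℝ => g (z + t * Complex.I)) 0) / 2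

/-- The Bers characteristic coefficient `a_{(F_e,G_e)}`. -/
def aBers (Fe Ge : ℂ → ℂ) (z : ℂ) : ℂ :=
  -(((starRingEnd ℂ) (Fe z) * dzbarC Ge z - dzbarC Fe z * (starRingEnd ℂ) (Ge z)) /
    (Fe z * (starRingEnd ℂ) (Ge z) - (starRingEnd ℂ) (Fe z) * Ge z))

/-- The Bers characteristic coefficient `b_{(F_e,G_e)}`. -/
def bBers (Fe Ge : ℂ → ℂ) (z : ℂ) : ℂ :=
  (Fe z * dzbarC Ge z - dzbarC Fe z * Ge z) /
    (Fe z * (starRingEnd ℂ) (Ge z) - (starRingEnd ℂ) (Fe z) * Ge z)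

/-- `(F, G)` is the `i₂e`-generating pair associated to complex generating pairs
`(F_{e1}, G_{e1})` on `D₁` and `(F_{e2}, G_{e2})` on `D₂`. -/
def I2eGenPair (Fe1 Ge1 Fe2 Ge2 : ℂ → ℂ) (D₁ D₂ : Set ℂ)
    (F G : Bicomplex → Bicomplex) : Prop :=
  ComplexGenPair Fe1 Ge1 D₁ ∧ ComplexGenPair Fe2 Ge2 D₂ ∧
  (∀ w, F w = ofComplex (Fe1 (P1 w)) * e1 + ofComplex (Fe2 (P2 w)) * e2) ∧
  (∀ w, G w = ofComplex (Ge1 (P1 w)) * e1 + ofComplex (Ge2 (P2 w)) * e2)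

/-! ### Auxiliary development for Statement 0 -/

section Aux

@[simp] lemma sub_z1 (w v : Bicomplex) : (w - v).z1 = w.z1 - v.z1 := rfl
@[simp] lemma sub_z2 (w v : Bicomplex) : (w - v).z2 = w.z2 - v.z2 := rfl
@[simp] lemma inv_z1 (w : Bicomplex) : (w⁻¹).z1 = w.z1 / (w.z1 ^ 2 + w.z2 ^ 2) := rfl
@[simp] lemma inv_z2 (w : Bicomplex) : (w⁻¹).z2 = -w.z2 / (w.z1 ^ 2 + w.z2 ^ 2) := rfl

@[simp] lemma ofProd_toProd (w : Bicomplex) : ofProd (toProd w) = w := rfl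
@[simp] lemma toProd_ofProd (p : ℂ × ℂ) : toProd (ofProd p) = p := rfl
@[simp] lemma toProd_fst (w : Bicomplex) : (toProd w).1 = w.z1 := rfl
@[simp] lemma toProd_snd (w : Bicomplex) : (toProd w).2 = w.z2 := rfl

lemma continuous_toProd : Continuous toProd := continuous_induced_dom

lemma tendsto_toProd_iff {α : Type*} {l : Filter α} {h : α → Bicomplex} {x : Bicomplex} :
    Tendsto h l (𝓝 x) ↔ Tendsto (fun a => toProd (h a)) l (𝓝 (toProd x)) := by
  rw [nhds_induced, tendsto_comap_iff]; rfl

lemma toProd_sub (a b : Bicomplex) : toProd (a - b) = toProd a - toProd b := rfl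

end Aux

section Aux2

open ContinuousLinearMap

lemma mul_inv_cancel' {w : Bicomplex} (h : w.z1 ^ 2 + w.z2 ^ 2 ≠ 0) : w * w⁻¹ = 1 := by
  ext <;> simp <;> field_simp <;> ring

lemma N_mul (w v : Bicomplex) :
    (w * v).z1 ^ 2 + (w * v).z2 ^ 2 = (w.z1 ^ 2 + w.z2 ^ 2) * (v.z1 ^ 2 + v.z2 ^ 2) := by
  simp; ring

lemma isUnit_iff_N_ne_zero (w : Bicomplex) : IsUnit w ↔ w.z1 ^ 2 + w.z2 ^ 2 ≠ 0 := by
  constructor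
  · rintro hu
    obtain ⟨v, hv⟩ := IsUnit.exists_right_inv hu
    intro h0
    have := N_mul w v
    rw [hv] at this
    simp [h0] at this
  · intro h
    exact IsUnit.of_mul_eq_one _ (mul_inv_cancel' h)

@[simp] lemma ofReal_z1 (t : ℝ) : (ofReal t).z1 = (t : ℂ) := rfl
@[simp] lemma ofReal_z2 (t : ℝ) : (ofReal t).z2 = 0 := rfl

lemma ofReal_mul_ofReal (s t : ℝ) : ofReal s * ofReal t = ofReal (s * t) := by
  ext <;> simp

lemma ofReal_mul_inv_mul {t : ℝ} (ht : t ≠ 0) {e : Bicomplex} (he : e.z1 ^ 2 + e.z2 ^ 2 ≠ 0) :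
    (ofReal t * e)⁻¹ * e = ofReal t⁻¹ := by
  have htc : (t : ℂ) ≠ 0 := by exact_mod_cast ht
  have hN : (ofReal t * e).z1 ^ 2 + (ofReal t * e).z2 ^ 2 ≠ 0 := by
    have h : (ofReal t * e).z1 ^ 2 + (ofReal t * e).z2 ^ 2
        = (t : ℂ) ^ 2 * (e.z1 ^ 2 + e.z2 ^ 2) := by simp; ring
    rw [h]
    exact mul_ne_zero (pow_ne_zero 2 htc) he
  have hu : IsUnit (ofReal t * e) := (isUnit_iff_N_ne_zero _).2 hN
  apply hu.mul_left_cancel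
  rw [← mul_assoc, mul_inv_cancel' hN, one_mul, mul_comm (ofReal t) e, mul_assoc,
    ofReal_mul_ofReal, mul_inv_cancel₀ ht]
  ext <;> simp

lemma toProd_mul_ofReal (x : Bicomplex) (s : ℝ) : toProd (x * ofReal s) = s • toProd x := by
  simp [Prod.ext_iff, Complex.real_smul]; constructor <;> ring

/-- Multiplication by `d` as a real-linear map on `ℂ × ℂ`. -/
def mulCLM (d : Bicomplex) : (ℂ × ℂ) →L[ℝ] ℂ × ℂ :=
  ((d.z1 • fst ℂ ℂ ℂ - d.z2 • snd ℂ ℂ ℂ).prod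
    (d.z2 • fst ℂ ℂ ℂ + d.z1 • snd ℂ ℂ ℂ)).restrictScalars ℝ

@[simp] lemma mulCLM_apply (d : Bicomplex) (p : ℂ × ℂ) :
    mulCLM d p = (d.z1 * p.1 - d.z2 * p.2, d.z2 * p.1 + d.z1 * p.2) := by
  simp [mulCLM, smul_eq_mul]

lemma mulCLM_toProd (d x : Bicomplex) : mulCLM d (toProd x) = toProd (d * x) := by
  simp [Prod.ext_iff]; ring

/-- The idempotent-coordinates map `(z₁, z₂) ↦ (z₁ - z₂ i, z₁ + z₂ i)`. -/
def phiC : (ℂ × ℂ) →L[ℂ] ℂ × ℂ :=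
  (fst ℂ ℂ ℂ - Complex.I • snd ℂ ℂ ℂ).prod (fst ℂ ℂ ℂ + Complex.I • snd ℂ ℂ ℂ)

/-- Inverse of `phiC`. -/
def psiC : (ℂ × ℂ) →L[ℂ] ℂ × ℂ :=
  ((2 : ℂ)⁻¹ • (fst ℂ ℂ ℂ + snd ℂ ℂ ℂ)).prod ((Complex.I / 2) • (fst ℂ ℂ ℂ - snd ℂ ℂ ℂ))

@[simp] lemma phiC_apply (p : ℂ × ℂ) :
    phiC p = (p.1 - Complex.I * p.2, p.1 + Complex.I * p.2) := by
  simp [phiC, smul_eq_mul]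

@[simp] lemma psiC_apply (q : ℂ × ℂ) :
    psiC q = ((q.1 + q.2) / 2, Complex.I * (q.1 - q.2) / 2) := by
  simp [psiC, smul_eq_mul]; constructor <;> ring

@[simp] lemma psiC_phiC (p : ℂ × ℂ) : psiC (phiC p) = p := by
  simp [Prod.ext_iff]
  linear_combination -p.2 * Complex.I_sq
@[simp] lemma phiC_psiC (q : ℂ × ℂ) : phiC (psiC q) = q := by
  simp [Prod.ext_iff]
  constructor
  · field_simp
    linear_combination (q.2 - q.1) * Complex.I_sq
  · field_simp
    linear_combination (q.1 - q.2) * Complex.I_sq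

lemma phiC_toProd (w : Bicomplex) : phiC (toProd w) = (P1 w, P2 w) := by
  simp [P1, P2, Prod.ext_iff, mul_comm]

lemma phiC_mul (x y : Bicomplex) :
    phiC (toProd (x * y)) = ((phiC (toProd x)).1 * (phiC (toProd y)).1,
      (phiC (toProd x)).2 * (phiC (toProd y)).2) := by
  simp [Prod.ext_iff]
  constructor <;> linear_combination -(x.z2 * y.z2) * Complex.I_sq

lemma phiC_N (y : Bicomplex) :
    (phiC (toProd y)).1 * (phiC (toProd y)).2 = y.z1 ^ 2 + y.z2 ^ 2 := by
  simp; linear_combination -(y.z2^2) * Complex.I_sq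

lemma phiC_inv {y : Bicomplex} (hy : y.z1 ^ 2 + y.z2 ^ 2 ≠ 0) :
    phiC (toProd y⁻¹) = ((phiC (toProd y)).1⁻¹, (phiC (toProd y)).2⁻¹) := by
  have h1 : (phiC (toProd y)).1 ≠ 0 := fun h => hy (by rw [← phiC_N, h, zero_mul])
  have h2 : (phiC (toProd y)).2 ≠ 0 := fun h => hy (by rw [← phiC_N, h, mul_zero])
  have hN := phiC_N y
  simp only [phiC_apply, toProd_fst, toProd_snd, inv_z1, inv_z2, Prod.ext_iff] at *
  constructor
  · apply eq_inv_of_mul_eq_one_left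
    field_simp
    linear_combination -(y.z2^2) * Complex.I_sq
  · apply eq_inv_of_mul_eq_one_left
    field_simp
    linear_combination -(y.z2^2) * Complex.I_sq

end Aux2

section Aux3

variable {f : Bicomplex → Bicomplex} {w : Bicomplex}

@[simp] lemma toProd_one : toProd (1 : Bicomplex) = ((1 : ℂ), (0 : ℂ)) := rfl
@[simp] lemma toProd_i1 : toProd i1 = (Complex.I, (0 : ℂ)) := rfl
@[simp] lemma toProd_i2 : toProd i2 = ((0 : ℂ), (1 : ℂ)) := rfl
@[simp] lemma toProd_jj : toProd jj = ((0 : ℂ), Complex.I) := rfl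

lemma arg_eq (w e : Bicomplex) (t : ℝ) :
    w + ofReal t * e = ofProd (toProd w + t • toProd e) := by
  ext <;> simp [ofProd, Complex.real_smul]

lemma pd_eq_fderiv (hw : DifferentiableAt ℝ (fProd f) (toProd w)) (e : Bicomplex) :
    pd e (s1 f) w = (fderiv ℝ (fProd f) (toProd w) (toProd e)).1 ∧
    pd e (s2 f) w = (fderiv ℝ (fProd f) (toProd w) (toProd e)).2 := by
  have hpath : HasDerivAt (fun t : ℝ => toProd w + t • toProd e) (toProd e) 0 := by
    simpa using ((hasDerivAt_id (0 : ℝ)).smul_const (toProd e)).const_add (toProd w)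
  have hw' : HasFDerivAt (fProd f) (fderiv ℝ (fProd f) (toProd w))
      (toProd w + (0 : ℝ) • toProd e) := by
    simpa using hw.hasFDerivAt
  have hF : HasDerivAt (fun t : ℝ => fProd f (toProd w + t • toProd e))
      (fderiv ℝ (fProd f) (toProd w) (toProd e)) 0 :=
    hw'.comp_hasDerivAt (f := fun t : ℝ => toProd w + t • toProd e) 0 hpath
  have e1 : (fun t : ℝ => s1 f (w + ofReal t * e))
      = fun t : ℝ => (fProd f (toProd w + t • toProd e)).1 := by
    funext t; rw [arg_eq]; rfl
  have e2 : (fun t : ℝ => s2 f (w + ofReal t * e))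
      = fun t : ℝ => (fProd f (toProd w + t • toProd e)).2 := by
    funext t; rw [arg_eq]; rfl
  have h1 := (ContinuousLinearMap.fst ℝ ℂ ℂ).hasFDerivAt.comp_hasDerivAt 0 hF
  have h2 := (ContinuousLinearMap.snd ℝ ℂ ℂ).hasFDerivAt.comp_hasDerivAt 0 hF
  constructor
  · show deriv _ 0 = _
    rw [e1]
    simpa [Function.comp_def] using h1.deriv
  · show deriv _ 0 = _
    rw [e2]
    simpa [Function.comp_def] using h2.deriv

lemma isOpen_toProd_image {U : Set Bicomplex} (hU : IsOpen U) : IsOpen (toProd '' U) := by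
  have : toProd '' U = ofProd ⁻¹' U := by
    ext p
    constructor
    · rintro ⟨w, hw, rfl⟩; simpa using hw
    · intro hp; exact ⟨ofProd p, hp, rfl⟩
  rw [this]
  have hc : Continuous (ofProd : ℂ × ℂ → Bicomplex) := by
    rw [continuous_induced_rng]; exact continuous_id
  exact hU.preimage hc

lemma diffAt_of_TContDiffOn {U : Set Bicomplex} (hU : IsOpen U) (hf : TContDiffOn 1 f U)
    (hw : w ∈ U) : DifferentiableAt ℝ (fProd f) (toProd w) :=
  ((hf.differentiableOn (by simp)).differentiableAt
    ((isOpen_toProd_image hU).mem_nhds ⟨w, hw, rfl⟩))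

/-- CR equations + differentiability imply the real derivative is multiplication by
`∂f/∂z₁ = (dz1 s1, dz1 s2)`. -/
lemma hasFDerivAt_mulCLM {U : Set Bicomplex} (hU : IsOpen U) (hf : TContDiffOn 1 f U)
    (hw : w ∈ U)
    (hcr1 : dz1bar (s1 f) w = 0) (hcr2 : dz2bar (s1 f) w = 0)
    (hcr3 : dz1bar (s2 f) w = 0) (hcr4 : dz2bar (s2 f) w = 0)
    (hcr5 : dz1 (s1 f) w = dz2 (s2 f) w) (hcr6 : dz1 (s2 f) w = -dz2 (s1 f) w) :
    HasFDerivAt (fProd f) (mulCLM ⟨dz1 (s1 f) w, dz1 (s2 f) w⟩) (toProd w) := by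
  have hdiff := diffAt_of_TContDiffOn hU hf hw
  set L := fderiv ℝ (fProd f) (toProd w) with hLdef
  obtain ⟨pa1, pa2⟩ := pd_eq_fderiv hdiff 1
  obtain ⟨pb1, pb2⟩ := pd_eq_fderiv hdiff i1
  obtain ⟨pc1, pc2⟩ := pd_eq_fderiv hdiff i2
  obtain ⟨pe1, pe2⟩ := pd_eq_fderiv hdiff jj
  simp only [dz1bar, dz2bar, dz1, dz2, pa1, pa2, pb1, pb2, pc1, pc2, pe1, pe2, ← hLdef,
    toProd_one, toProd_i1, toProd_i2, toProd_jj, div_eq_zero_iff, OfNat.ofNat_ne_zero,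
    or_false] at hcr1 hcr2 hcr3 hcr4 hcr5 hcr6 ⊢
  set A := L ((1 : ℂ), (0 : ℂ)) with hA
  set B := L (Complex.I, (0 : ℂ)) with hB
  set C := L ((0 : ℂ), (1 : ℂ)) with hC
  set E := L ((0 : ℂ), Complex.I) with hE
  have hb1 : B.1 = Complex.I * A.1 := by linear_combination (-Complex.I) * hcr1 + B.1 * Complex.I_sq
  have hb2 : B.2 = Complex.I * A.2 := by linear_combination (-Complex.I) * hcr3 + B.2 * Complex.I_sq
  have he1 : E.1 = Complex.I * C.1 := by linear_combination (-Complex.I) * hcr2 + E.1 * Complex.I_sq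
  have he2 : E.2 = Complex.I * C.2 := by linear_combination (-Complex.I) * hcr4 + E.2 * Complex.I_sq
  simp only [hb1, hb2, he1, he2] at hcr5 hcr6
  have hc2 : C.2 = A.1 := by linear_combination -hcr5 + ((C.2 - A.1) / 2) * Complex.I_sq
  have hc1 : C.1 = -A.2 := by linear_combination hcr6 + ((C.1 + A.2) / 2) * Complex.I_sq
  have hL : mulCLM ⟨(A.1 - Complex.I * B.1) / 2, (A.2 - Complex.I * B.2) / 2⟩ = L := by
    apply ContinuousLinearMap.ext
    intro v
    have hv : v = v.1.re • ((1 : ℂ), (0 : ℂ)) + v.1.im • (Complex.I, (0 : ℂ))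
        + v.2.re • ((0 : ℂ), (1 : ℂ)) + v.2.im • ((0 : ℂ), Complex.I) := by
      apply Prod.ext <;> simp [Complex.real_smul] <;>
        exact (Complex.re_add_im _).symm
    conv_rhs => rw [hv]
    rw [map_add, map_add, map_add, map_smul, map_smul, map_smul, map_smul,
      ← hA, ← hB, ← hC, ← hE]
    apply Prod.ext <;>
      simp only [mulCLM_apply, Prod.smul_fst, Prod.smul_snd, Prod.fst_add, Prod.snd_add,
        Complex.real_smul, hb1, hb2, he1, he2, hc1, hc2]
    · linear_combination (-A.1) * Complex.re_add_im v.1 + A.2 * Complex.re_add_im v.2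
        + ((-(A.1 * v.1) + A.2 * v.2) / 2) * Complex.I_sq
    · linear_combination (-A.2) * Complex.re_add_im v.1 - A.1 * Complex.re_add_im v.2
        + (-(A.2 * v.1 + A.1 * v.2) / 2) * Complex.I_sq
  rw [hL]
  exact hdiff.hasFDerivAt

end Aux3

section Aux4

variable {f : Bicomplex → Bicomplex} {w₀ d : Bicomplex}

lemma tendsto_path (w₀ : Bicomplex) {e : Bicomplex} (he : e.z1 ^ 2 + e.z2 ^ 2 ≠ 0) :
    Tendsto (fun t : ℝ => w₀ + ofReal t * e) (𝓝[≠] (0 : ℝ)) (𝓝[invertibleDiff w₀] w₀) := by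
  rw [tendsto_nhdsWithin_iff]
  constructor
  · rw [tendsto_toProd_iff]
    have heq : (fun t : ℝ => toProd (w₀ + ofReal t * e))
        = fun t : ℝ => toProd w₀ + t • toProd e := by
      funext t; rw [arg_eq, toProd_ofProd]
    rw [heq]
    have hc : Continuous fun t : ℝ => toProd w₀ + t • toProd e := by continuity
    simpa using (hc.tendsto 0).mono_left nhdsWithin_le_nhds
  · filter_upwards [self_mem_nhdsWithin] with t ht
    show _ ∈ invertibleDiff w₀
    have harg : w₀ + ofReal t * e - w₀ = ofReal t * e := by ring
    simp only [invertibleDiff, Set.mem_setOf_eq, harg]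
    have htc : (t : ℂ) ≠ 0 := by exact_mod_cast ht
    have hh : (ofReal t * e).z1 ^ 2 + (ofReal t * e).z2 ^ 2
        = (t : ℂ) ^ 2 * (e.z1 ^ 2 + e.z2 ^ 2) := by simp; ring
    rw [hh]
    exact mul_ne_zero (pow_ne_zero 2 htc) he

lemma hasTDeriv_L (h : HasTDerivAt f d w₀) (hdiff : DifferentiableAt ℝ (fProd f) (toProd w₀))
    {e : Bicomplex} (he : e.z1 ^ 2 + e.z2 ^ 2 ≠ 0) :
    fderiv ℝ (fProd f) (toProd w₀) (toProd e) = toProd (d * e) := by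
  have hpath : HasDerivAt (fun t : ℝ => toProd w₀ + t • toProd e) (toProd e) 0 := by
    simpa using ((hasDerivAt_id (0 : ℝ)).smul_const (toProd e)).const_add (toProd w₀)
  have hw' : HasFDerivAt (fProd f) (fderiv ℝ (fProd f) (toProd w₀))
      (toProd w₀ + (0 : ℝ) • toProd e) := by
    simpa using hdiff.hasFDerivAt
  have hF : HasDerivAt (fun t : ℝ => fProd f (toProd w₀ + t • toProd e))
      (fderiv ℝ (fProd f) (toProd w₀) (toProd e)) 0 :=
    hw'.comp_hasDerivAt (f := fun t : ℝ => toProd w₀ + t • toProd e) 0 hpath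
  have lim1 : Tendsto (fun t : ℝ => t⁻¹ • (fProd f (toProd w₀ + t • toProd e)
      - fProd f (toProd w₀ + (0 : ℝ) • toProd e))) (𝓝[≠] (0 : ℝ))
      (𝓝 (fderiv ℝ (fProd f) (toProd w₀) (toProd e))) := by
    refine (hasDerivAt_iff_tendsto_slope.1 hF).congr fun t => ?_
    rw [slope_def_module, sub_zero]
  have lim1' : Tendsto (fun t : ℝ => toProd ((f (w₀ + ofReal t * e) - f w₀) * ofReal t⁻¹))
      (𝓝[≠] (0 : ℝ)) (𝓝 (fderiv ℝ (fProd f) (toProd w₀) (toProd e))) := by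
    apply lim1.congr
    intro t
    rw [toProd_mul_ofReal, toProd_sub]
    congr 2
    · show fProd f (toProd w₀ + t • toProd e) = toProd (f (w₀ + ofReal t * e))
      rw [arg_eq]; rfl
    · show fProd f (toProd w₀ + (0 : ℝ) • toProd e) = toProd (f w₀)
      have : toProd w₀ + (0 : ℝ) • toProd e = toProd w₀ := by simp
      rw [this]; rfl
  have lim2 : Tendsto (fun t : ℝ => toProd ((f (w₀ + ofReal t * e) - f w₀) * ofReal t⁻¹))
      (𝓝[≠] (0 : ℝ)) (𝓝 (toProd (d * e))) := by
    have h1 := h.comp (tendsto_path w₀ he)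
    have h2 : Tendsto (fun t : ℝ =>
        toProd ((f (w₀ + ofReal t * e) - f w₀) / (w₀ + ofReal t * e - w₀)))
        (𝓝[≠] (0 : ℝ)) (𝓝 (toProd d)) := tendsto_toProd_iff.1 h1
    have h3 := ((mulCLM e).continuous.tendsto (toProd d)).comp h2
    have h4 : Tendsto (fun t : ℝ =>
        toProd (e * ((f (w₀ + ofReal t * e) - f w₀) / (w₀ + ofReal t * e - w₀))))
        (𝓝[≠] (0 : ℝ)) (𝓝 (toProd (e * d))) := by
      have := h3
      simp only [Function.comp_def, mulCLM_toProd] at this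
      exact this
    rw [show e * d = d * e from mul_comm e d] at h4
    apply h4.congr'
    filter_upwards [self_mem_nhdsWithin] with t ht
    congr 1
    have harg : w₀ + ofReal t * e - w₀ = ofReal t * e := by ring
    rw [harg]
    show e * ((f _ - f w₀) * (ofReal t * e)⁻¹) = _
    rw [mul_comm e, mul_assoc, ofReal_mul_inv_mul ht he]
  exact tendsto_nhds_unique lim1' lim2

lemma forward_vals {U : Set Bicomplex} (hU : IsOpen U) (hf : TContDiffOn 1 f U) (hw : w₀ ∈ U)
    (h : HasTDerivAt f d w₀) :
    dz1 (s1 f) w₀ = d.z1 ∧ dz1 (s2 f) w₀ = d.z2 ∧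
    dz1bar (s1 f) w₀ = 0 ∧ dz2bar (s1 f) w₀ = 0 ∧
    dz1bar (s2 f) w₀ = 0 ∧ dz2bar (s2 f) w₀ = 0 ∧
    dz2 (s2 f) w₀ = d.z1 ∧ dz2 (s1 f) w₀ = -d.z2 := by
  have hdiff := diffAt_of_TContDiffOn hU hf hw
  have h1 := hasTDeriv_L h hdiff (e := 1) (by simp)
  have hI1 := hasTDeriv_L h hdiff (e := i1) (by simp [i1, Complex.I_sq])
  have hI2 := hasTDeriv_L h hdiff (e := i2) (by simp [i2])
  have hJ := hasTDeriv_L h hdiff (e := jj) (by simp [jj, Complex.I_sq])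
  have p11 : pd 1 (s1 f) w₀ = d.z1 := by rw [(pd_eq_fderiv hdiff 1).1, h1]; simp
  have p12 : pd 1 (s2 f) w₀ = d.z2 := by rw [(pd_eq_fderiv hdiff 1).2, h1]; simp
  have p21 : pd i1 (s1 f) w₀ = d.z1 * Complex.I := by
    rw [(pd_eq_fderiv hdiff i1).1, hI1]; simp [i1]
  have p22 : pd i1 (s2 f) w₀ = d.z2 * Complex.I := by
    rw [(pd_eq_fderiv hdiff i1).2, hI1]; simp [i1]
  have p31 : pd i2 (s1 f) w₀ = -d.z2 := by
    rw [(pd_eq_fderiv hdiff i2).1, hI2]; simp [i2]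
  have p32 : pd i2 (s2 f) w₀ = d.z1 := by
    rw [(pd_eq_fderiv hdiff i2).2, hI2]; simp [i2]
  have p41 : pd jj (s1 f) w₀ = -(d.z2 * Complex.I) := by
    rw [(pd_eq_fderiv hdiff jj).1, hJ]; simp [jj]
  have p42 : pd jj (s2 f) w₀ = d.z1 * Complex.I := by
    rw [(pd_eq_fderiv hdiff jj).2, hJ]; simp [jj]
  refine ⟨?_, ?_, ?_, ?_, ?_, ?_, ?_, ?_⟩ <;>
    simp only [dz1, dz2, dz1bar, dz2bar, p11, p12, p21, p22, p31, p32, p41, p42]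
  · linear_combination (-(d.z1) / 2) * Complex.I_sq
  · linear_combination (-(d.z2) / 2) * Complex.I_sq
  · linear_combination ((d.z1) / 2) * Complex.I_sq
  · linear_combination (-(d.z2) / 2) * Complex.I_sq
  · linear_combination ((d.z2) / 2) * Complex.I_sq
  · linear_combination ((d.z1) / 2) * Complex.I_sq
  · linear_combination (-(d.z1) / 2) * Complex.I_sq
  · linear_combination ((d.z2) / 2) * Complex.I_sq

end Aux4

section Aux5

open Metric ContinuousLinearMap

variable {f : Bicomplex → Bicomplex} {w₀ : Bicomplex}

/-- Multiplication by `c` as a `ℂ`-linear continuous map. -/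
noncomputable def cMul (c : ℂ) : ℂ →L[ℂ] ℂ := c • ContinuousLinearMap.id ℂ ℂ

@[simp] lemma cMul_apply (c z : ℂ) : cMul c z = c * z := rfl

lemma continuous_phiC_toProd : Continuous fun w : Bicomplex => phiC (toProd w) :=
  phiC.continuous.comp continuous_toProd

lemma tendsto_phiC_iff {α : Type*} {l : Filter α} {h : α → Bicomplex} {x : Bicomplex} :
    Tendsto h l (𝓝 x) ↔ Tendsto (fun a => phiC (toProd (h a))) l (𝓝 (phiC (toProd x))) := by
  rw [tendsto_toProd_iff]
  constructor
  · intro ht; exact (phiC.continuous.tendsto _).comp ht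
  · intro ht
    have h2 := (psiC.continuous.tendsto _).comp ht
    simp only [Function.comp_def, psiC_phiC] at h2
    exact h2

/-- The diagonal form of the conjugated derivative. -/
lemma Dapp (d : Bicomplex) (q : ℂ × ℂ) :
    ((phiC.restrictScalars ℝ).comp ((mulCLM d).comp (psiC.restrictScalars ℝ))) q
      = ((phiC (toProd d)).1 * q.1, (phiC (toProd d)).2 * q.2) := by
  simp only [ContinuousLinearMap.coe_comp', Function.comp_apply,
    ContinuousLinearMap.coe_restrictScalars', phiC_apply, psiC_apply, mulCLM_apply,
    Prod.ext_iff, toProd_fst, toProd_snd]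
  constructor
  · linear_combination (-(d.z1 * (q.1 - q.2)) / 2) * Complex.I_sq
  · linear_combination ((d.z1 * (q.1 - q.2)) / 2) * Complex.I_sq

lemma reverse_hasTDerivAt {U : Set Bicomplex} (hU : IsOpen U) (hf : TContDiffOn 1 f U)
    (hw : w₀ ∈ U)
    (hcr : ∀ w ∈ U, dz1bar (s1 f) w = 0 ∧ dz2bar (s1 f) w = 0 ∧
        dz1bar (s2 f) w = 0 ∧ dz2bar (s2 f) w = 0 ∧
        dz1 (s1 f) w = dz2 (s2 f) w ∧ dz1 (s2 f) w = -dz2 (s1 f) w) :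
    HasTDerivAt f ⟨dz1 (s1 f) w₀, dz1 (s2 f) w₀⟩ w₀ := by
  classical
  set dd : Bicomplex → Bicomplex := fun w => ⟨dz1 (s1 f) w, dz1 (s2 f) w⟩ with hdd
  set G : ℂ × ℂ → ℂ × ℂ := fun q => phiC (fProd f (psiC q)) with hGdef
  set W : Set (ℂ × ℂ) := psiC ⁻¹' (toProd '' U) with hW
  have hWopen : IsOpen W := (isOpen_toProd_image hU).preimage psiC.continuous
  set q₀ : ℂ × ℂ := phiC (toProd w₀) with hq₀
  have hq₀W : q₀ ∈ W := by
    simp only [hW, Set.mem_preimage, hq₀, psiC_phiC]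
    exact ⟨w₀, hw, rfl⟩
  obtain ⟨ε, hε, hball⟩ := Metric.isOpen_iff.1 hWopen q₀ hq₀W
  -- derivative of G at every point of W
  have keyG : ∀ q ∈ W, HasFDerivAt G
      ((phiC.restrictScalars ℝ).comp ((mulCLM (dd (ofProd (psiC q)))).comp
        (psiC.restrictScalars ℝ))) q := by
    intro q hq
    obtain ⟨w, hwU, hwp⟩ := hq
    obtain ⟨h1, h2, h3, h4, h5, h6⟩ := hcr w hwU
    have hA := hasFDerivAt_mulCLM hU hf hwU h1 h2 h3 h4 h5 h6
    have hw' : ofProd (psiC q) = w := by rw [← hwp]; rfl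
    rw [hw']
    have hF : HasFDerivAt (fProd f) (mulCLM (dd w)) (psiC q) := by rw [← hwp]; exact hA
    exact (phiC.restrictScalars ℝ).hasFDerivAt.comp q
      (hF.comp q (psiC.restrictScalars ℝ).hasFDerivAt)
  -- membership facts for balls
  have hmem1 : ∀ q ∈ ball q₀ ε, q.1 ∈ ball q₀.1 ε := by
    intro q hq
    rw [mem_ball] at hq ⊢
    exact lt_of_le_of_lt (le_max_left _ _) (by rw [← Prod.dist_eq]; exact hq)
  have hmem2 : ∀ q ∈ ball q₀ ε, q.2 ∈ ball q₀.2 ε := by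
    intro q hq
    rw [mem_ball] at hq ⊢
    exact lt_of_le_of_lt (le_max_right _ _) (by rw [← Prod.dist_eq]; exact hq)
  have hmemP : ∀ {a b}, a ∈ ball q₀.1 ε → b ∈ ball q₀.2 ε → (a, b) ∈ ball q₀ ε := by
    intro a b ha hb
    rw [← Prod.mk.eta (p := q₀), ← ball_prod_same]
    exact ⟨ha, hb⟩
  -- constancy of (G q).1 in the second variable
  have hconst1 : ∀ q ∈ ball q₀ ε, (G q).1 = (G (q.1, q₀.2)).1 := by
    intro q hq
    have hderiv : ∀ z ∈ ball q₀.2 ε,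
        HasFDerivWithinAt (fun z2 => (G (q.1, z2)).1) (0 : ℂ →L[ℝ] ℂ) (ball q₀.2 ε) z := by
      intro z hz
      have hqz : (q.1, z) ∈ W := hball (hmemP (hmem1 q hq) hz)
      have hc := ((keyG _ hqz).comp z (hasFDerivAt_prodMk_right q.1 z)).fst
      have hzero : (ContinuousLinearMap.fst ℝ ℂ ℂ).comp
          (((phiC.restrictScalars ℝ).comp ((mulCLM (dd (ofProd (psiC (q.1, z))))).comp
            (psiC.restrictScalars ℝ))).comp (ContinuousLinearMap.inr ℝ ℂ ℂ)) = 0 := by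
        apply ContinuousLinearMap.ext
        intro h
        show (((phiC.restrictScalars ℝ).comp ((mulCLM (dd (ofProd (psiC (q.1, z))))).comp
          (psiC.restrictScalars ℝ))) ((0 : ℂ), h)).1 = 0
        rw [Dapp]
        simp
      rw [hzero] at hc
      exact hc.hasFDerivWithinAt
    have hdist := Convex.norm_image_sub_le_of_norm_hasFDerivWithin_le (C := 0) hderiv
      (fun x _ => by simp) (convex_ball q₀.2 ε) (mem_ball_self hε) (hmem2 q hq)
    rw [mul_comm, mul_zero] at hdist
    have := norm_le_zero_iff.1 hdist
    have h2 := sub_eq_zero.1 this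
    exact h2
  -- constancy of (G q).2 in the first variable
  have hconst2 : ∀ q ∈ ball q₀ ε, (G q).2 = (G (q₀.1, q.2)).2 := by
    intro q hq
    have hderiv : ∀ z ∈ ball q₀.1 ε,
        HasFDerivWithinAt (fun z1 => (G (z1, q.2)).2) (0 : ℂ →L[ℝ] ℂ) (ball q₀.1 ε) z := by
      intro z hz
      have hqz : (z, q.2) ∈ W := hball (hmemP hz (hmem2 q hq))
      have hc := ((keyG _ hqz).comp (f := fun e : ℂ => (e, q.2)) z (hasFDerivAt_prodMk_left z q.2)).snd
      have hzero : (ContinuousLinearMap.snd ℝ ℂ ℂ).comp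
          (((phiC.restrictScalars ℝ).comp ((mulCLM (dd (ofProd (psiC (z, q.2))))).comp
            (psiC.restrictScalars ℝ))).comp (ContinuousLinearMap.inl ℝ ℂ ℂ)) = 0 := by
        apply ContinuousLinearMap.ext
        intro h
        show (((phiC.restrictScalars ℝ).comp ((mulCLM (dd (ofProd (psiC (z, q.2))))).comp
          (psiC.restrictScalars ℝ))) (h, (0 : ℂ))).2 = 0
        rw [Dapp]
        simp
      rw [hzero] at hc
      exact hc.hasFDerivWithinAt
    have hdist := Convex.norm_image_sub_le_of_norm_hasFDerivWithin_le (C := 0) hderiv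
      (fun x _ => by simp) (convex_ball q₀.1 ε) (mem_ball_self hε) (hmem1 q hq)
    rw [mul_comm, mul_zero] at hdist
    exact sub_eq_zero.1 (norm_le_zero_iff.1 hdist)
  -- the two one-variable functions
  set g1 : ℂ → ℂ := fun z => (G (z, q₀.2)).1 with hg1
  set g2 : ℂ → ℂ := fun z => (G (q₀.1, z)).2 with hg2
  -- derivative of G at q₀
  have hpsiq₀ : ofProd (psiC q₀) = w₀ := by rw [hq₀, psiC_phiC]; rfl
  have hG0 : HasFDerivAt G ((phiC.restrictScalars ℝ).comp ((mulCLM (dd w₀)).comp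
      (psiC.restrictScalars ℝ))) q₀ := by
    have := keyG q₀ hq₀W
    rwa [hpsiq₀] at this
  set c1 : ℂ := (phiC (toProd (dd w₀))).1 with hc1
  set c2 : ℂ := (phiC (toProd (dd w₀))).2 with hc2
  -- derivative of g1 at q₀.1
  have hg1d : HasDerivAt g1 c1 q₀.1 := by
    have hc := (hG0.comp (f := fun e : ℂ => (e, q₀.2)) q₀.1 (hasFDerivAt_prodMk_left q₀.1 q₀.2)).fst
    have hCLM : (ContinuousLinearMap.fst ℝ ℂ ℂ).comp
        (((phiC.restrictScalars ℝ).comp ((mulCLM (dd w₀)).comp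
          (psiC.restrictScalars ℝ))).comp (ContinuousLinearMap.inl ℝ ℂ ℂ))
        = (cMul c1).restrictScalars ℝ := by
      apply ContinuousLinearMap.ext
      intro h
      show (((phiC.restrictScalars ℝ).comp ((mulCLM (dd w₀)).comp
        (psiC.restrictScalars ℝ))) (h, (0 : ℂ))).1 = c1 * h
      rw [Dapp, hc1]
    rw [hCLM] at hc
    have hF : HasFDerivAt g1 (cMul c1) q₀.1 := hasFDerivAt_of_restrictScalars ℝ hc rfl
    simpa using hF.hasDerivAt
  have hg2d : HasDerivAt g2 c2 q₀.2 := by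
    have hc := (hG0.comp q₀.2 (hasFDerivAt_prodMk_right q₀.1 q₀.2)).snd
    have hCLM : (ContinuousLinearMap.snd ℝ ℂ ℂ).comp
        (((phiC.restrictScalars ℝ).comp ((mulCLM (dd w₀)).comp
          (psiC.restrictScalars ℝ))).comp (ContinuousLinearMap.inr ℝ ℂ ℂ))
        = (cMul c2).restrictScalars ℝ := by
      apply ContinuousLinearMap.ext
      intro h
      show (((phiC.restrictScalars ℝ).comp ((mulCLM (dd w₀)).comp
        (psiC.restrictScalars ℝ))) ((0 : ℂ), h)).2 = c2 * h
      rw [Dapp, hc2]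
    rw [hCLM] at hc
    have hF : HasFDerivAt g2 (cMul c2) q₀.2 := hasFDerivAt_of_restrictScalars ℝ hc rfl
    simpa using hF.hasDerivAt
  -- maps into punctured neighborhoods
  have hmap1 : Tendsto (fun w => (phiC (toProd w)).1) (𝓝[invertibleDiff w₀] w₀)
      (𝓝[≠] q₀.1) := by
    rw [tendsto_nhdsWithin_iff]
    constructor
    · exact ((continuous_fst.comp continuous_phiC_toProd).tendsto w₀).mono_left
        nhdsWithin_le_nhds
    · filter_upwards [self_mem_nhdsWithin] with w hw'
      have hNw : (w - w₀).z1 ^ 2 + (w - w₀).z2 ^ 2 ≠ 0 := hw'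
      show (phiC (toProd w)).1 ≠ q₀.1
      intro hEq
      apply hNw
      rw [← phiC_N (w - w₀)]
      have hsub : phiC (toProd (w - w₀)) = phiC (toProd w) - phiC (toProd w₀) := by
        rw [toProd_sub, map_sub]
      rw [hsub]
      have : (phiC (toProd w) - phiC (toProd w₀)).1 = 0 := by
        rw [Prod.fst_sub, ← hq₀, hEq, sub_self]
      rw [this, zero_mul]
  have hmap2 : Tendsto (fun w => (phiC (toProd w)).2) (𝓝[invertibleDiff w₀] w₀)
      (𝓝[≠] q₀.2) := by
    rw [tendsto_nhdsWithin_iff]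
    constructor
    · exact ((continuous_snd.comp continuous_phiC_toProd).tendsto w₀).mono_left
        nhdsWithin_le_nhds
    · filter_upwards [self_mem_nhdsWithin] with w hw'
      have hNw : (w - w₀).z1 ^ 2 + (w - w₀).z2 ^ 2 ≠ 0 := hw'
      show (phiC (toProd w)).2 ≠ q₀.2
      intro hEq
      apply hNw
      rw [← phiC_N (w - w₀)]
      have hsub : phiC (toProd (w - w₀)) = phiC (toProd w) - phiC (toProd w₀) := by
        rw [toProd_sub, map_sub]
      rw [hsub]
      have : (phiC (toProd w) - phiC (toProd w₀)).2 = 0 := by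
        rw [Prod.snd_sub, ← hq₀, hEq, sub_self]
      rw [this, mul_zero]
  -- the slope limits
  have hs1 := (hasDerivAt_iff_tendsto_slope.1 hg1d).comp hmap1
  have hs2 := (hasDerivAt_iff_tendsto_slope.1 hg2d).comp hmap2
  have hpair : Tendsto (fun w => (slope g1 q₀.1 ((phiC (toProd w)).1),
      slope g2 q₀.2 ((phiC (toProd w)).2))) (𝓝[invertibleDiff w₀] w₀) (𝓝 (c1, c2)) :=
    Tendsto.prodMk_nhds hs1 hs2
  -- translate the goal
  show Tendsto _ (𝓝[invertibleDiff w₀] w₀) (𝓝 (dd w₀))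
  rw [tendsto_phiC_iff]
  have hc12 : phiC (toProd (dd w₀)) = (c1, c2) := by rw [hc1, hc2]
  rw [hc12]
  apply hpair.congr'
  -- eventual equality
  have hballmem : ∀ᶠ w in 𝓝[invertibleDiff w₀] w₀, phiC (toProd w) ∈ ball q₀ ε := by
    apply mem_nhdsWithin_of_mem_nhds
    have : IsOpen ((fun w : Bicomplex => phiC (toProd w)) ⁻¹' ball q₀ ε) :=
      isOpen_ball.preimage continuous_phiC_toProd
    refine this.mem_nhds ?_
    show phiC (toProd w₀) ∈ ball q₀ ε
    rw [← hq₀]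
    exact mem_ball_self hε
  filter_upwards [hballmem, self_mem_nhdsWithin] with w hwb hwinv
  have hNw : (w - w₀).z1 ^ 2 + (w - w₀).z2 ^ 2 ≠ 0 := hwinv
  have hsub : phiC (toProd (w - w₀)) = phiC (toProd w) - q₀ := by
    rw [toProd_sub, map_sub, ← hq₀]
  -- identify f with G in idempotent coordinates
  have hfG : ∀ v : Bicomplex, phiC (toProd (f v)) = G (phiC (toProd v)) := by
    intro v
    rw [hGdef]
    simp only [psiC_phiC]
    rfl
  have hg1v : (G (phiC (toProd w))).1 = g1 ((phiC (toProd w)).1) := hconst1 _ hwb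
  have hg2v : (G (phiC (toProd w))).2 = g2 ((phiC (toProd w)).2) := hconst2 _ hwb
  have hg10 : (G q₀).1 = g1 q₀.1 := rfl
  have hg20 : (G q₀).2 = g2 q₀.2 := rfl
  -- compute the quotient
  show (slope g1 q₀.1 ((phiC (toProd w)).1), slope g2 q₀.2 ((phiC (toProd w)).2))
      = phiC (toProd ((f w - f w₀) / (w - w₀)))
  have hdiv : (f w - f w₀) / (w - w₀) = (f w - f w₀) * (w - w₀)⁻¹ := rfl
  rw [hdiv, phiC_mul, phiC_inv hNw]
  have hnum : phiC (toProd (f w - f w₀)) = G (phiC (toProd w)) - G q₀ := by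
    rw [toProd_sub, map_sub, hfG, hfG]
  apply Prod.ext
  · show slope g1 q₀.1 ((phiC (toProd w)).1)
      = (phiC (toProd (f w - f w₀))).1 * ((phiC (toProd (w - w₀))).1)⁻¹
    rw [hnum, hsub, slope_def_field, Prod.fst_sub, Prod.fst_sub, hg1v, hg10, div_eq_mul_inv]
  · show slope g2 q₀.2 ((phiC (toProd w)).2)
      = (phiC (toProd (f w - f w₀))).2 * ((phiC (toProd (w - w₀))).2)⁻¹
    rw [hnum, hsub, slope_def_field, Prod.snd_sub, Prod.snd_sub, hg2v, hg20, div_eq_mul_inv]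

end Aux5

end Bicomplex

open Bicomplex

/-- Characterization of `𝕋`-holomorphic `C¹` functions by the complexified
Cauchy–Riemann equations, with the formula for the derivative and the invertibility
criterion via the Jacobian determinant. -/
theorem tholomorphic_iff_complexified_CR (U : Set Bicomplex) (hU : IsOpen U)
    (f : Bicomplex → Bicomplex) (hf : TContDiffOn 1 f U) :
    (THolomorphicOn f U ↔
      ∀ w ∈ U,
        dz1bar (s1 f) w = 0 ∧ dz2bar (s1 f) w = 0 ∧
        dz1bar (s2 f) w = 0 ∧ dz2bar (s2 f) w = 0 ∧
        dz1 (s1 f) w = dz2 (s2 f) w ∧ dz1 (s2 f) w = -dz2 (s1 f) w) ∧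
    (THolomorphicOn f U →
      ∀ w ∈ U,
        HasTDerivAt f ⟨dz1 (s1 f) w, dz1 (s2 f) w⟩ w ∧
        (IsUnit (⟨dz1 (s1 f) w, dz1 (s2 f) w⟩ : Bicomplex) ↔
          dz1 (s1 f) w * dz2 (s2 f) w - dz1 (s2 f) w * dz2 (s1 f) w ≠ 0)) := by
  constructor
  · constructor
    · intro hHolo w hw
      obtain ⟨d, hd⟩ := hHolo w hw
      obtain ⟨e1', e2', e3, e4, e5, e6, e7, e8⟩ := forward_vals hU hf hw hd
      exact ⟨e3, e4, e5, e6, by rw [e1', e7], by rw [e2', e8, neg_neg]⟩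
    · intro hcr w hw
      exact ⟨_, reverse_hasTDerivAt hU hf hw hcr⟩
  · intro hHolo w hw
    obtain ⟨d, hd⟩ := hHolo w hw
    obtain ⟨e1', e2', e3, e4, e5, e6, e7, e8⟩ := forward_vals hU hf hw hd
    have hdeq : (⟨dz1 (s1 f) w, dz1 (s2 f) w⟩ : Bicomplex) = d := by
      rw [e1', e2']
    constructor
    · rw [hdeq]; exact hd
    · rw [isUnit_iff_N_ne_zero]
      show dz1 (s1 f) w ^ 2 + dz1 (s2 f) w ^ 2 ≠ 0 ↔ _
      have hJ : dz1 (s1 f) w * dz2 (s2 f) w - dz1 (s2 f) w * dz2 (s1 f) w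
          = dz1 (s1 f) w ^ 2 + dz1 (s2 f) w ^ 2 := by
        rw [e1', e2', e7, e8]; ring
      rw [hJ]
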